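/- Let Z be a real random variable with the standard normal distribution N(0,1). Then for all b, z ∈ ℝ, P(|Z + b/2| > |z + b/2|) = 1 − |Φ(z + b) − Φ(−z)|. In particular, the FAB p-value function corresponding to observed value z and parameter b equals p(z,b) = 1 − |Φ(z + b) − Φ(−z)|. -/

import Mathlib

open MeasureTheory ProbabilityTheory

/-- Φ, the standard normal cumulative distribution function. -/
noncomputable def Phi : ℝ → ℝ := fun x => ProbabilityTheory.cdf (gaussianReal 0 1) x

open Set in
section

lemma gauss_noAtoms : NoAtoms (gaussianReal 0 1) := by
  rw [gaussianReal_of_var_ne_zero _ one_ne_zero]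
  exact ⟨fun x => (withDensity_absolutelyContinuous _ _) (measure_singleton x)⟩

lemma Phi_nonneg (x : ℝ) : 0 ≤ Phi x := cdf_nonneg _ x
lemma Phi_le_one (x : ℝ) : Phi x ≤ 1 := cdf_le_one _ x
lemma Phi_mono : Monotone Phi := monotone_cdf _

lemma gauss_Iic (x : ℝ) : gaussianReal 0 1 (Iic x) = ENNReal.ofReal (Phi x) :=
  (ofReal_cdf _ x).symm

lemma gauss_map_neg : (gaussianReal 0 1).map (fun y : ℝ => -y) = gaussianReal 0 1 := by
  have h := gaussianReal_map_const_mul (μ := 0) (v := 1) (-1)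
  simp only [neg_one_mul, mul_zero] at h
  convert h using 2
  ext
  push_cast
  ring

lemma Phi_neg (x : ℝ) : Phi (-x) = 1 - Phi x := by
  haveI noat : NullSingletonClass (gaussianReal 0 1) := gauss_noAtoms
  have h1 : gaussianReal 0 1 (Iic (-x)) = gaussianReal 0 1 (Ici x) := by
    conv_lhs => rw [← gauss_map_neg]
    rw [Measure.map_apply measurable_neg measurableSet_Iic]
    congr 1
    ext y
    simp
  have h2 : gaussianReal 0 1 (Ici x) = 1 - gaussianReal 0 1 (Iic x) := by
    rw [← measure_congr (Iio_ae_eq_Iic (μ := gaussianReal 0 1) (a := x)),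
      ← prob_compl_eq_one_sub measurableSet_Iio, compl_Iio]
  rw [gauss_Iic, h2, gauss_Iic] at h1
  rw [show (1:ENNReal) = ENNReal.ofReal 1 by simp, ← ENNReal.ofReal_sub _ (Phi_nonneg x)] at h1
  rw [← ENNReal.ofReal_eq_ofReal_iff (Phi_nonneg _) (by linarith [Phi_le_one x]), h1]

end

open Set in
theorem stmt_4 {Ω : Type*} [MeasurableSpace Ω] (P : Measure Ω) [IsProbabilityMeasure P]
    (Z : Ω → ℝ) (hZ : P.map Z = gaussianReal 0 1) :
    ∀ b z : ℝ,
      P {ω | |Z ω + b / 2| > |z + b / 2|} = ENNReal.ofReal (1 - |Phi (z + b) - Phi (-z)|) := by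
  intro b z
  have hZm : AEMeasurable Z P :=
    aemeasurable_of_map_neZero (by rw [hZ]; infer_instance)
  haveI : NullSingletonClass (gaussianReal 0 1) := gauss_noAtoms
  set c := b / 2 with hc
  set m := |z + c| with hm
  have hm0 : 0 ≤ m := abs_nonneg _
  have hle : -m - c ≤ m - c := by linarith
  have hset : {ω | |Z ω + c| > m} = Z ⁻¹' (Icc (-m - c) (m - c))ᶜ := by
    ext ω
    simp only [mem_setOf_eq, mem_preimage, mem_compl_iff, mem_Icc, gt_iff_lt, ← not_le, abs_le]
    constructor <;> intro h h' <;> exact h ⟨by linarith [h'.1], by linarith [h'.2]⟩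
  have hIcc : gaussianReal 0 1 (Icc (-m - c) (m - c))
      = ENNReal.ofReal (Phi (m - c) - Phi (-m - c)) := by
    rw [show Icc (-m - c) (m - c) = Iic (m - c) \ Iio (-m - c) by
        ext y; simp only [mem_Icc, mem_diff, mem_Iic, mem_Iio, not_lt]; exact and_comm,
      measure_diff (Iio_subset_Iic hle) measurableSet_Iio.nullMeasurableSet (measure_ne_top _ _),
      measure_congr (Iio_ae_eq_Iic), gauss_Iic, gauss_Iic,
      ← ENNReal.ofReal_sub _ (Phi_nonneg _)]
  rw [hset, ← Measure.map_apply_of_aemeasurable hZm measurableSet_Icc.compl, hZ,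
    prob_compl_eq_one_sub measurableSet_Icc, hIcc,
    show (1 : ENNReal) = ENNReal.ofReal 1 by simp,
    ← ENNReal.ofReal_sub _ (sub_nonneg.2 (Phi_mono hle))]
  congr 1
  have key : Phi (m - c) - Phi (-m - c) = |Phi (z + b) - Phi (-z)| := by
    rcases abs_cases (z + c) with ⟨h1, h2⟩ | ⟨h1, h2⟩
    · have hmz : m = z + c := by rw [hm, h1]
      rw [abs_of_nonneg (sub_nonneg.2 (Phi_mono (show -z ≤ z + b by rw [hc] at h2; linarith))),
        show m - c = z by rw [hmz]; ring,
        show -m - c = -(z + b) by rw [hmz, hc]; ring,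
        Phi_neg, Phi_neg]
      ring
    · have hmz : m = -(z + c) := by rw [hm, h1]
      rw [abs_of_nonpos (sub_nonpos.2 (Phi_mono (show z + b ≤ -z by rw [hc] at h2; linarith))),
        show m - c = -(z + b) by rw [hmz, hc]; ring,
        show -m - c = z by rw [hmz]; ring,
        Phi_neg, Phi_neg]
      ring
  rw [key]
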